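/- In a free group, any two commuting elements lie in a common cyclic subgroup; consequently every abelian subgroup of a free group is cyclic (trivial or infinite cyclic). -/
import Mathlib

private lemma free_comm_aux {ι : Type*} {i j : ι}
    (h : FreeGroup.of i * FreeGroup.of j = FreeGroup.of j * FreeGroup.of i) : i = j := by
  by_contra hne
  classical
  have := congrArg (FreeGroup.lift (fun k => if k = i then Equiv.swap (0:Fin 3) 1 else
    if k = j then Equiv.swap 0 2 else 1)) h
  simp only [map_mul, FreeGroup.lift_apply_of, if_pos rfl, if_neg hne, if_neg (Ne.symm hne),
    if_true] at this
  exact absurd this (by decide)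

private lemma cyclic_of_free_comm {G : Type*} [Group G] [IsFreeGroup G]
    (hc : ∀ a b : G, a * b = b * a) : IsCyclic G := by
  obtain ⟨ι, ⟨b⟩⟩ := IsFreeGroup.nonempty_basis (G := G)
  have hsub : Subsingleton ι := by
    constructor
    intro i j
    apply free_comm_aux (i := i) (j := j)
    apply b.repr.symm.injective
    simp only [map_mul]
    exact hc _ _
  rcases isEmpty_or_nonempty ι with he | hne
  · have : Subsingleton G := by
      constructor
      intro a c
      apply b.repr.injective
      apply FreeGroup.toWord_injective
      have h1 : (b.repr a).toWord = [] := List.eq_nil_of_length_eq_zero (by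
        cases h : (b.repr a).toWord with
        | nil => simp [h]
        | cons hd tl => exact (IsEmpty.false hd.1).elim )
      have h2 : (b.repr c).toWord = [] := List.eq_nil_of_length_eq_zero (by
        cases h : (b.repr c).toWord with
        | nil => simp [h]
        | cons hd tl => exact (IsEmpty.false hd.1).elim )
      rw [h1, h2]
    exact isCyclic_of_subsingleton
  · obtain ⟨i⟩ := hne
    refine ⟨⟨b i, fun g => ?_⟩⟩
    -- every element of G is a power of b i
    have : b.repr g ∈ Subgroup.zpowers (FreeGroup.of i) := by
      have htop : Subgroup.zpowers (FreeGroup.of i) = ⊤ := by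
        rw [eq_top_iff, ← FreeGroup.closure_range_of ι]
        apply Subgroup.closure_le _ |>.mpr
        rintro _ ⟨k, rfl⟩
        rw [Subsingleton.elim k i]
        exact Subgroup.mem_zpowers _
      rw [htop]; trivial
    obtain ⟨n, hn⟩ := this
    exact ⟨n, by
      apply b.repr.injective
      rw [map_zpow]
      rw [← hn]
      simp⟩

/-- In a free group, any two commuting elements lie in a common cyclic subgroup;
consequently every abelian subgroup of a free group is cyclic. -/
theorem stmt_10 {α : Type*} :
    (∀ x y : FreeGroup α, Commute x y →
      ∃ z : FreeGroup α, x ∈ Subgroup.zpowers z ∧ y ∈ Subgroup.zpowers z) ∧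
    (∀ H : Subgroup (FreeGroup α),
      (∀ a ∈ H, ∀ b ∈ H, a * b = b * a) → IsCyclic ↥H) := by
  have part2 : ∀ H : Subgroup (FreeGroup α),
      (∀ a ∈ H, ∀ b ∈ H, a * b = b * a) → IsCyclic ↥H := by
    intro H hH
    exact cyclic_of_free_comm (fun a b => Subtype.ext (hH a a.2 b b.2))
  refine ⟨?_, part2⟩
  intro x y hxy
  set H := Subgroup.closure ({x, y} : Set (FreeGroup α)) with hHdef
  have hcomm : ∀ a ∈ H, ∀ b ∈ H, a * b = b * a := by
    intro a ha b hb
    induction ha, hb using Subgroup.closure_induction₂ with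
    | mem a b hain hbin =>
      rcases hain with rfl | rfl <;> rcases hbin with rfl | rfl
      · rfl
      · exact hxy
      · exact hxy.symm
      · rfl
    | one_left b hb => simp
    | one_right a ha => simp
    | mul_left a b c _ _ _ h1 h2 => exact (Commute.mul_left h1 h2 : Commute _ _)
    | mul_right a b c _ _ _ h1 h2 => exact (Commute.mul_right h1 h2 : Commute _ _)
    | inv_left a b _ _ h => exact (Commute.inv_left h : Commute _ _)
    | inv_right a b _ _ h => exact (Commute.inv_right h : Commute _ _)
  haveI := part2 H hcomm
  obtain ⟨⟨g, hg⟩, hgen⟩ := (inferInstance : IsCyclic ↥H)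
  refine ⟨g, ?_, ?_⟩
  · have hx : x ∈ H := Subgroup.subset_closure (by simp)
    obtain ⟨n, hn⟩ := hgen ⟨x, hx⟩
    exact ⟨n, congrArg Subtype.val hn⟩
  · have hy : y ∈ H := Subgroup.subset_closure (by simp)
    obtain ⟨n, hn⟩ := hgen ⟨y, hy⟩
    exact ⟨n, congrArg Subtype.val hn⟩
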